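/- The edge-balanced index set of the crown graph K_4 × K_2 is {0, 2, 4}. -/

import Mathlib

open SimpleGraph
open Finset

/-- The lexicographic product (composition) `G[H]`. -/
def lexProd {α β : Type*} (G : SimpleGraph α) (H : SimpleGraph β) :
    SimpleGraph (α × β) where
  Adj x y := G.Adj x.1 y.1 ∨ (x.1 = y.1 ∧ H.Adj x.2 y.2)
  symm := ⟨fun x y (h : G.Adj x.1 y.1 ∨ (x.1 = y.1 ∧ H.Adj x.2 y.2)) =>
    h.elim (fun h' => Or.inl h'.symm) (fun ⟨he, h2⟩ => Or.inr ⟨he.symm, h2.symm⟩)⟩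
  loopless := ⟨fun x (h : G.Adj x.1 x.1 ∨ (x.1 = x.1 ∧ H.Adj x.2 x.2)) =>
    h.elim (G.loopless.irrefl x.1) (fun ⟨_, h2⟩ => H.loopless.irrefl x.2 h2)⟩

/-- The direct (tensor, Kronecker) product `G × H`. -/
def tensorProd {α β : Type*} (G : SimpleGraph α) (H : SimpleGraph β) :
    SimpleGraph (α × β) where
  Adj x y := G.Adj x.1 y.1 ∧ H.Adj x.2 y.2
  symm := ⟨fun _ _ (h : G.Adj _ _ ∧ H.Adj _ _) => ⟨h.1.symm, h.2.symm⟩⟩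
  loopless := ⟨fun x (h : G.Adj x.1 x.1 ∧ H.Adj x.2 x.2) => G.loopless.irrefl x.1 h.1⟩

/-- The number of edges labeled `i` by the edge labeling `f`. -/
noncomputable def edgeCount {V : Type*} (G : SimpleGraph V) (f : G.edgeSet → ZMod 2) (i : ZMod 2) : ℕ :=
  Nat.card {e : G.edgeSet // f e = i}

/-- The number of edges incident to `v` that are labeled `i` (the `i`-degree of `v`). -/
noncomputable def labDeg {V : Type*} (G : SimpleGraph V) (f : G.edgeSet → ZMod 2) (i : ZMod 2) (v : V) : ℕ :=
  Nat.card {e : G.edgeSet // f e = i ∧ v ∈ (e : Sym2 V)}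

/-- The number of vertices whose induced (partial) label is `i`: those incident to strictly
more `i`-edges than `(1-i)`-edges. -/
noncomputable def vertexCount {V : Type*} (G : SimpleGraph V) (f : G.edgeSet → ZMod 2) (i : ZMod 2) : ℕ :=
  Nat.card {v : V // labDeg G f (1 - i) v < labDeg G f i v}

/-- An edge labeling (a surjective function onto `ZMod 2`) is edge-friendly if
`|e_f(0) - e_f(1)| ≤ 1`. -/
def EdgeFriendly {V : Type*} (G : SimpleGraph V) (f : G.edgeSet → ZMod 2) : Prop :=
  Function.Surjective f ∧ |(edgeCount G f 0 : ℤ) - (edgeCount G f 1 : ℤ)| ≤ 1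

/-- A graph is strongly edge-balanced if some edge-friendly labeling `f` satisfies
`v_f(0) = v_f(1)` and `e_f(0) = e_f(1)`. -/
def StronglyEdgeBalanced {V : Type*} (G : SimpleGraph V) : Prop :=
  ∃ f : G.edgeSet → ZMod 2, EdgeFriendly G f ∧
    vertexCount G f 0 = vertexCount G f 1 ∧ edgeCount G f 0 = edgeCount G f 1

/-- `|v_f(0) - v_f(1)|` for an edge labeling `f`. -/
noncomputable def ebIndex {V : Type*} (G : SimpleGraph V) (f : G.edgeSet → ZMod 2) : ℕ :=
  ((vertexCount G f 0 : ℤ) - (vertexCount G f 1 : ℤ)).natAbs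

/-- The edge-balanced index set of `G`. -/
def EBI {V : Type*} (G : SimpleGraph V) : Set ℕ :=
  {k | ∃ f : G.edgeSet → ZMod 2, EdgeFriendly G f ∧ ebIndex G f = k}

/-- The crown graph `K_n × K_2`: the direct product of the complete graph on `n` vertices
with `K_2`; `(u,a)` is adjacent to `(v,b)` iff `u ≠ v` and `a ≠ b`. -/
def crown (n : ℕ) : SimpleGraph (Fin n × Fin 2) :=
  tensorProd (⊤ : SimpleGraph (Fin n)) (⊤ : SimpleGraph (Fin 2))

-- instances
abbrev Vt := Fin 4 × Fin 2
instance : DecidableRel (crown 4).Adj := fun x y =>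
  inferInstanceAs (Decidable (x.1 ≠ y.1 ∧ x.2 ≠ y.2))
instance : Fintype (crown 4).edgeSet := by unfold crown tensorProd; infer_instance

-- bridging lemmas
lemma edgeCount_eq (f : (crown 4).edgeSet → ZMod 2) (i : ZMod 2) :
    edgeCount (crown 4) f i = (univ.filter fun e : (crown 4).edgeSet => f e = i).card := by
  rw [edgeCount, Nat.card_eq_fintype_card, Fintype.card_subtype]

lemma labDeg_eq (f : (crown 4).edgeSet → ZMod 2) (i : ZMod 2) (v : Vt) :
    labDeg (crown 4) f i v
      = (univ.filter fun e : (crown 4).edgeSet => f e = i ∧ v ∈ (e : Sym2 Vt)).card := by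
  rw [labDeg, Nat.card_eq_fintype_card, Fintype.card_subtype]

lemma vertexCount_eq (f : (crown 4).edgeSet → ZMod 2) (i : ZMod 2) :
    vertexCount (crown 4) f i
      = (univ.filter fun v : Vt =>
          (univ.filter fun e : (crown 4).edgeSet => f e = (1-i) ∧ v ∈ (e : Sym2 Vt)).card
            < (univ.filter fun e : (crown 4).edgeSet => f e = i ∧ v ∈ (e : Sym2 Vt)).card).card := by
  rw [vertexCount, Nat.card_eq_fintype_card]
  simp_rw [labDeg_eq]
  rw [Fintype.card_subtype]

-- decide facts
lemma deg3 : ∀ v : Vt, (univ.filter fun e : (crown 4).edgeSet => v ∈ (e : Sym2 Vt)).card = 3 := by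
  decide

lemma mem2 : ∀ e : (crown 4).edgeSet, (univ.filter fun v : Vt => v ∈ (e : Sym2 Vt)).card = 2 := by
  decide

lemma card12 : (univ : Finset (crown 4).edgeSet).card = 12 := by decide

lemma zmod2 : ∀ x : ZMod 2, ¬ x = 0 ↔ x = 1 := by decide

-- label split on a vertex
lemma labDeg_split (f : (crown 4).edgeSet → ZMod 2) (v : Vt) :
    labDeg (crown 4) f 0 v + labDeg (crown 4) f 1 v = 3 := by
  have h0 : ∀ i : ZMod 2, (univ.filter fun e : (crown 4).edgeSet => f e = i ∧ v ∈ (e : Sym2 Vt))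
      = (univ.filter fun e : (crown 4).edgeSet => v ∈ (e : Sym2 Vt)).filter fun e => f e = i := by
    intro i; rw [filter_filter]; apply filter_congr; intro e _; tauto
  have key := card_filter_add_card_filter_not
    (s := univ.filter fun e : (crown 4).edgeSet => v ∈ (e : Sym2 Vt))
    (p := fun e : (crown 4).edgeSet => f e = 0)
  have hne : ((univ.filter fun e : (crown 4).edgeSet => v ∈ (e : Sym2 Vt)).filter
        fun e => ¬ f e = 0)
      = (univ.filter fun e : (crown 4).edgeSet => v ∈ (e : Sym2 Vt)).filter fun e => f e = 1 := by
    apply filter_congr; intro e _; simp [zmod2]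
  rw [labDeg_eq, labDeg_eq, h0 0, h0 1, ← hne, key, deg3]

lemma edgeCount_split (f : (crown 4).edgeSet → ZMod 2) :
    edgeCount (crown 4) f 0 + edgeCount (crown 4) f 1 = 12 := by
  have key := card_filter_add_card_filter_not
    (s := (univ : Finset (crown 4).edgeSet))
    (p := fun e : (crown 4).edgeSet => f e = 0)
  have hne : ((univ : Finset (crown 4).edgeSet).filter fun e => ¬ f e = 0)
      = (univ : Finset (crown 4).edgeSet).filter fun e => f e = 1 := by
    apply filter_congr; intro e _; simp [zmod2]
  rw [edgeCount_eq, edgeCount_eq, ← hne, key, card12]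

-- handshake
lemma handshake (f : (crown 4).edgeSet → ZMod 2) (i : ZMod 2) :
    ∑ v : Vt, labDeg (crown 4) f i v = 2 * edgeCount (crown 4) f i := by
  simp_rw [labDeg_eq, edgeCount_eq, Finset.card_filter]
  rw [Finset.sum_comm]
  have h1 : ∀ e : (crown 4).edgeSet,
      (∑ v : Vt, if f e = i ∧ v ∈ (e : Sym2 Vt) then 1 else 0) = if f e = i then 2 else 0 := by
    intro e
    by_cases h : f e = i
    · simp only [h, true_and, if_true]
      rw [← Finset.card_filter]
      exact mem2 e
    · simp [h]
  rw [Finset.sum_congr rfl fun e _ => h1 e, Finset.mul_sum]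
  apply Finset.sum_congr rfl
  intro e _
  split <;> simp

-- vertex counts partition
lemma vertexCount_split (f : (crown 4).edgeSet → ZMod 2) :
    vertexCount (crown 4) f 0 + vertexCount (crown 4) f 1 = 8 := by
  have h8 : (univ : Finset Vt).card = 8 := by decide
  have key := card_filter_add_card_filter_not
    (s := (univ : Finset Vt))
    (p := fun v : Vt => labDeg (crown 4) f 1 v < labDeg (crown 4) f 0 v)
  have hne : ((univ : Finset Vt).filter fun v => ¬ labDeg (crown 4) f 1 v < labDeg (crown 4) f 0 v)
      = (univ : Finset Vt).filter fun v => labDeg (crown 4) f 0 v < labDeg (crown 4) f 1 v := by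
    apply filter_congr; intro v _
    have := labDeg_split f v
    simp only [not_lt, eq_iff_iff]
    omega
  rw [hne, h8] at key
  rw [vertexCount, vertexCount]
  simp_rw [Nat.card_eq_fintype_card, Fintype.card_subtype]
  have e10 : (1 : ZMod 2) - 0 = 1 := by decide
  have e11 : (1 : ZMod 2) - 1 = 0 := by decide
  rw [e10, e11]
  exact key

-- upper bound for each count
lemma vertexCount_le (f : (crown 4).edgeSet → ZMod 2)
    (h6 : edgeCount (crown 4) f 0 = 6 ∧ edgeCount (crown 4) f 1 = 6) (i : ZMod 2) :
    vertexCount (crown 4) f i ≤ 6 := by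
  have hcase : ∀ j : ZMod 2, j = 0 ∨ j = 1 := by decide
  have hsub : (1 : ZMod 2) - i = 0 ∨ (1 : ZMod 2) - i = 1 := hcase _
  have hsum : ∑ v : Vt, labDeg (crown 4) f i v = 12 := by
    rw [handshake]
    rcases hcase i with h | h <;> rw [h] <;> omega
  have hA : 2 * vertexCount (crown 4) f i ≤ 12 := by
    rw [vertexCount, Nat.card_eq_fintype_card, Fintype.card_subtype]
    set A := univ.filter fun v : Vt => labDeg (crown 4) f (1-i) v < labDeg (crown 4) f i v with hAdef
    calc 2 * A.card = ∑ _v ∈ A, 2 := by rw [Finset.sum_const]; ring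
    _ ≤ ∑ v ∈ A, labDeg (crown 4) f i v := by
        apply Finset.sum_le_sum
        intro v hv
        rw [hAdef, mem_filter] at hv
        have hs := labDeg_split f v
        have hsplit : labDeg (crown 4) f (1-i) v + labDeg (crown 4) f i v = 3 := by
          rcases hcase i with h | h <;> rw [h] at *
          · rw [show (1:ZMod 2) - 0 = 1 from by decide]; omega
          · rw [show (1:ZMod 2) - 1 = 0 from by decide]; omega
        omega
    _ ≤ ∑ v : Vt, labDeg (crown 4) f i v := Finset.sum_le_sum_of_subset (subset_univ A)
    _ = 12 := hsum
  omega

-- explicit labelings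
def L0 : List (Sym2 Vt) :=
  [s((0,0),(1,1)), s((0,0),(2,1)), s((0,0),(3,1)), s((1,0),(0,1)), s((1,0),(2,1)), s((1,0),(3,1))]
def L2 : List (Sym2 Vt) :=
  [s((0,0),(1,1)), s((0,0),(2,1)), s((0,0),(3,1)), s((1,0),(0,1)), s((1,0),(2,1)), s((3,0),(2,1))]
def L4 : List (Sym2 Vt) :=
  [s((0,0),(1,1)), s((0,0),(2,1)), s((0,0),(3,1)), s((1,0),(0,1)), s((2,0),(0,1)), s((3,0),(0,1))]

def fL (L : List (Sym2 Vt)) : (crown 4).edgeSet → ZMod 2 :=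
  fun e => if (e : Sym2 Vt) ∈ L then 0 else 1

lemma ebIndex_eq (f : (crown 4).edgeSet → ZMod 2) :
    ebIndex (crown 4) f
      = (((univ.filter fun v : Vt =>
          (univ.filter fun e : (crown 4).edgeSet => f e = (1-0) ∧ v ∈ (e : Sym2 Vt)).card
            < (univ.filter fun e : (crown 4).edgeSet => f e = 0 ∧ v ∈ (e : Sym2 Vt)).card).card : ℤ)
        - ((univ.filter fun v : Vt =>
          (univ.filter fun e : (crown 4).edgeSet => f e = (1-1) ∧ v ∈ (e : Sym2 Vt)).card
            < (univ.filter fun e : (crown 4).edgeSet => f e = 1 ∧ v ∈ (e : Sym2 Vt)).card).card : ℤ)).natAbs := by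
  rw [ebIndex, vertexCount_eq, vertexCount_eq]

lemma friendly_of_counts (f : (crown 4).edgeSet → ZMod 2)
    (h0 : edgeCount (crown 4) f 0 = 6) (h1 : edgeCount (crown 4) f 1 = 6) :
    EdgeFriendly (crown 4) f := by
  constructor
  · intro i
    have hcase : ∀ j : ZMod 2, j = 0 ∨ j = 1 := by decide
    rcases hcase i with rfl | rfl
    · by_contra h
      push_neg at h
      have : edgeCount (crown 4) f 0 = 0 := by
        rw [edgeCount_eq]
        rw [Finset.card_eq_zero, Finset.filter_eq_empty_iff]
        intro e _; exact h e
      omega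
    · by_contra h
      push_neg at h
      have : edgeCount (crown 4) f 1 = 0 := by
        rw [edgeCount_eq]
        rw [Finset.card_eq_zero, Finset.filter_eq_empty_iff]
        intro e _; exact h e
      omega
  · rw [h0, h1]; norm_num

theorem EBI_crown_four : EBI (crown 4) = {0, 2, 4} := by
  ext k
  simp only [EBI, Set.mem_setOf_eq, Set.mem_insert_iff, Set.mem_singleton_iff]
  constructor
  · rintro ⟨f, ⟨hsurj, habs⟩, hk⟩
    have hsplit := edgeCount_split f
    rw [abs_le] at habs
    have h6 : edgeCount (crown 4) f 0 = 6 ∧ edgeCount (crown 4) f 1 = 6 := by omega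
    have h0 := vertexCount_le f h6 0
    have h1 := vertexCount_le f h6 1
    have hv := vertexCount_split f
    rw [← hk, ebIndex]
    omega
  · have dec0 : ∀ L : List (Sym2 Vt), edgeCount (crown 4) (fL L) 0
        = (univ.filter fun e : (crown 4).edgeSet => fL L e = 0).card := fun L => edgeCount_eq _ 0
    have dec1 : ∀ L : List (Sym2 Vt), edgeCount (crown 4) (fL L) 1
        = (univ.filter fun e : (crown 4).edgeSet => fL L e = 1).card := fun L => edgeCount_eq _ 1
    intro hk
    rcases hk with rfl | rfl | rfl
    · refine ⟨fL L0, friendly_of_counts _ ?_ ?_, ?_⟩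
      · rw [dec0]; decide
      · rw [dec1]; decide
      · rw [ebIndex_eq]; decide
    · refine ⟨fL L2, friendly_of_counts _ ?_ ?_, ?_⟩
      · rw [dec0]; decide
      · rw [dec1]; decide
      · rw [ebIndex_eq]; decide
    · refine ⟨fL L4, friendly_of_counts _ ?_ ?_, ?_⟩
      · rw [dec0]; decide
      · rw [dec1]; decide
      · rw [ebIndex_eq]; decide
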